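/- The polynomial g(n) = ∏_{j=8}^{15}(n+j) + 9·∏_{j=0}^{7}(n-j) (a degree-8 real polynomial) has a complex root α with Re(α) > 14, i.e., with Re(α) > d - 1 = 14 for d = 15. Consequently, the degree-15 polynomial f(n) = C(n+15,15) + 9·C(n+7,15) has a root whose real part exceeds 14. -/

import Mathlib

open Finset

namespace Stmt10Aux

open Polynomial

noncomputable def P : Polynomial ℂ :=
  (∏ j ∈ Finset.Icc (8:ℕ) 15, (X + C (j:ℂ))) + 9 * ∏ j ∈ Finset.range 8, (X - C (j:ℂ))

lemma P_eval (z : ℂ) : P.eval z =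
    (∏ j ∈ Finset.Icc (8:ℕ) 15, (z + (j : ℂ))) + 9 * ∏ j ∈ Finset.range 8, (z - (j : ℂ)) := by
  simp [P, eval_prod]

lemma q_monic : (∏ j ∈ Finset.Icc (8:ℕ) 15, (X + C (j:ℂ))).Monic :=
  monic_prod_of_monic _ _ (fun _ _ => monic_X_add_C _)

lemma r_monic : (∏ j ∈ Finset.range 8, (X - C (j:ℂ))).Monic :=
  monic_prod_of_monic _ _ (fun _ _ => monic_X_sub_C _)

lemma q_deg : (∏ j ∈ Finset.Icc (8:ℕ) 15, (X + C (j:ℂ))).natDegree = 8 := by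
  rw [natDegree_prod_of_monic _ _ (fun _ _ => monic_X_add_C _)]
  simp only [natDegree_X_add_C]
  decide

lemma r_deg : (∏ j ∈ Finset.range 8, (X - C (j:ℂ))).natDegree = 8 := by
  rw [natDegree_prod_of_monic _ _ (fun _ _ => monic_X_sub_C _)]
  simp only [natDegree_X_sub_C]
  simp

lemma P_coeff8 : P.coeff 8 = 10 := by
  have h1 := q_monic.coeff_natDegree
  have h2 := r_monic.coeff_natDegree
  rw [q_deg] at h1; rw [r_deg] at h2
  have h9 : (9 : Polynomial ℂ) = C 9 := (map_ofNat C 9).symm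
  rw [P, coeff_add, h9, coeff_C_mul, h1, h2]
  norm_num

lemma P_natDegree : P.natDegree = 8 := by
  refine le_antisymm ?_ (le_natDegree_of_ne_zero (by rw [P_coeff8]; norm_num))
  refine (natDegree_add_le _ _).trans ?_
  simp only [q_deg]
  refine max_le le_rfl ?_
  refine (natDegree_mul_le).trans ?_
  have h9 : (9 : Polynomial ℂ) = C 9 := (map_ofNat C 9).symm
  rw [h9, natDegree_C, r_deg]

lemma P_leadingCoeff : P.leadingCoeff = 10 := by
  rw [leadingCoeff, P_natDegree, P_coeff8]

lemma P_ne_zero : P ≠ 0 := by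
  intro h
  have := P_leadingCoeff
  rw [h] at this
  simp at this

lemma P_card_roots : Multiset.card P.roots = 8 := by
  rw [(splits_iff_card_roots).mp (IsAlgClosed.splits P), P_natDegree]

lemma P_factor : C (10:ℂ) * (Multiset.map (fun a => X - C a) P.roots).prod = P := by
  have := C_leadingCoeff_mul_prod_multiset_X_sub_C (p := P) (by rw [P_card_roots, P_natDegree])
  rwa [P_leadingCoeff] at this

lemma P_eval_factor (z : ℂ) :
    P.eval z = 10 * (Multiset.map (fun a => z - a) P.roots).prod := by
  conv_lhs => rw [← P_factor]
  rw [eval_mul, eval_C, eval_multiset_prod, Multiset.map_map]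
  simp

noncomputable def zz : ℂ := ⟨29/2, 25⟩
noncomputable def ww : ℂ := ⟨27/2, 25⟩

lemma point_ineq {a : ℂ} (ha : a.re ≤ 14) :
    Complex.normSq (ww - a) ≤ Complex.normSq (zz - a) := by
  simp only [Complex.normSq_apply, Complex.sub_re, Complex.sub_im, zz, ww]
  nlinarith [sq_nonneg (a.im)]

lemma multiset_ineq (s : Multiset ℂ) (h : ∀ a ∈ s, a.re ≤ 14) :
    (s.map fun a => Complex.normSq (ww - a)).prod ≤
      (s.map fun a => Complex.normSq (zz - a)).prod := by
  induction s using Multiset.induction_on with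
  | empty => simp
  | cons a s ih =>
    simp only [Multiset.map_cons, Multiset.prod_cons]
    have h1 := point_ineq (h a (Multiset.mem_cons_self a s))
    have h2 := ih (fun b hb => h b (Multiset.mem_cons_of_mem hb))
    have hn : (0:ℝ) ≤ (s.map fun a => Complex.normSq (ww - a)).prod := by
      refine Multiset.prod_nonneg ?_
      intro x hx
      simp only [Multiset.mem_map] at hx
      obtain ⟨b, _, rfl⟩ := hx
      exact Complex.normSq_nonneg _
    exact mul_le_mul h1 h2 hn (Complex.normSq_nonneg _)

lemma eval_compare (h : ∀ a ∈ P.roots, a.re ≤ 14) :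
    Complex.normSq (P.eval ww) ≤ Complex.normSq (P.eval zz) := by
  rw [P_eval_factor zz, P_eval_factor ww, map_mul, map_mul,
    map_multiset_prod Complex.normSq, map_multiset_prod Complex.normSq,
    Multiset.map_map, Multiset.map_map]
  exact mul_le_mul_of_nonneg_left (multiset_ineq _ h) (Complex.normSq_nonneg _)

set_option maxHeartbeats 2000000 in
lemma eval_zz : P.eval zz = ⟨3529276059725/128, 271094302375/8⟩ := by
  rw [P_eval]
  rw [show (Finset.Icc (8:ℕ) 15) = {8,9,10,11,12,13,14,15} by rfl]
  rw [show ∏ j ∈ ({8,9,10,11,12,13,14,15} : Finset ℕ), (zz + (j : ℂ)) =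
    (zz+8)*((zz+9)*((zz+10)*((zz+11)*((zz+12)*((zz+13)*((zz+14)*(zz+15))))))) by
      norm_num [Finset.prod_insert, Finset.mem_insert]]
  simp only [Finset.prod_range_succ, Finset.prod_range_zero, one_mul]
  apply Complex.ext <;>
    simp [zz, Complex.add_re, Complex.add_im, Complex.mul_re, Complex.mul_im] <;> norm_num

set_option maxHeartbeats 2000000 in
lemma eval_ww : P.eval ww = ⟨-10309402858675/128, -2049915358375/8⟩ := by
  rw [P_eval]
  rw [show (Finset.Icc (8:ℕ) 15) = {8,9,10,11,12,13,14,15} by rfl]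
  rw [show ∏ j ∈ ({8,9,10,11,12,13,14,15} : Finset ℕ), (ww + (j : ℂ)) =
    (ww+8)*((ww+9)*((ww+10)*((ww+11)*((ww+12)*((ww+13)*((ww+14)*(ww+15))))))) by
      norm_num [Finset.prod_insert, Finset.mem_insert]]
  simp only [Finset.prod_range_succ, Finset.prod_range_zero, one_mul]
  apply Complex.ext <;>
    simp [ww, Complex.add_re, Complex.add_im, Complex.mul_re, Complex.mul_im] <;> norm_num

lemma exists_root : ∃ a ∈ P.roots, 14 < a.re := by
  by_contra hcon
  push_neg at hcon
  have h := eval_compare hcon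
  rw [eval_zz, eval_ww] at h
  simp only [Complex.normSq_apply] at h
  norm_num at h

lemma part1 : ∃ α : ℂ,
    (∏ j ∈ Finset.Icc (8:ℕ) 15, (α + (j : ℂ))) + 9 * ∏ j ∈ Finset.range 8, (α - (j : ℂ)) = 0
      ∧ 14 < α.re := by
  obtain ⟨a, ha, hre⟩ := exists_root
  refine ⟨a, ?_, hre⟩
  have := (Polynomial.mem_roots P_ne_zero).mp ha
  rw [Polynomial.IsRoot, P_eval] at this
  exact this

end Stmt10Aux

theorem stmt_10 :
    (∃ α : ℂ,
        (∏ j ∈ Finset.Icc (8:ℕ) 15, (α + (j : ℂ))) + 9 * ∏ j ∈ Finset.range 8, (α - (j : ℂ)) = 0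
          ∧ 14 < α.re)
      ∧ ∃ α : ℂ,
          (∏ j ∈ Finset.Icc (1:ℕ) 15, (α + (j : ℂ))) / (Nat.factorial 15 : ℂ)
              + 9 * ((∏ j ∈ Finset.range 8, (α - (j : ℂ)))
                  * ∏ j ∈ Finset.Icc (1:ℕ) 7, (α + (j : ℂ))) / (Nat.factorial 15 : ℂ) = 0
            ∧ 14 < α.re := by
  refine ⟨Stmt10Aux.part1, ?_⟩
  obtain ⟨α, h0, hre⟩ := Stmt10Aux.part1
  refine ⟨α, ?_, hre⟩
  have hsplit : (∏ j ∈ Finset.Icc (1:ℕ) 15, (α + (j : ℂ)))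
      = (∏ j ∈ Finset.Icc (1:ℕ) 7, (α + (j : ℂ))) * ∏ j ∈ Finset.Icc (8:ℕ) 15, (α + (j : ℂ)) := by
    rw [← Finset.prod_union (by decide),
      show Finset.Icc (1:ℕ) 7 ∪ Finset.Icc 8 15 = Finset.Icc 1 15 by decide]
  rw [hsplit, ← add_div]
  have : (∏ j ∈ Finset.Icc (1:ℕ) 7, (α + (j : ℂ))) * (∏ j ∈ Finset.Icc (8:ℕ) 15, (α + (j : ℂ)))
      + 9 * ((∏ j ∈ Finset.range 8, (α - (j : ℂ))) * ∏ j ∈ Finset.Icc (1:ℕ) 7, (α + (j : ℂ)))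
      = (∏ j ∈ Finset.Icc (1:ℕ) 7, (α + (j : ℂ)))
        * ((∏ j ∈ Finset.Icc (8:ℕ) 15, (α + (j : ℂ))) + 9 * ∏ j ∈ Finset.range 8, (α - (j : ℂ))) := by
    ring
  rw [this, h0, mul_zero, zero_div]
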